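/- Let δ ∈ (0, 1), let (Ω, F, P) be a probability space, A ∈ F, and let G, H be sub-σ-fields of F. With X = E[1_A | G] and Y = E[1_A | H], one has P(X ≤ δ, Y ≥ 1 − δ) ≤ δ·(P(X ≤ δ) + P(Y ≥ 1 − δ)). -/

import Mathlib

open MeasureTheory

theorem corner_probability_bound_aux
    {δ : ℝ} (hδ0 : 0 < δ) (hδ1 : δ < 1)
    {Ω : Type} (G H : MeasurableSpace Ω) {F : MeasurableSpace Ω} (P : Measure Ω)
    [IsProbabilityMeasure P]
    (A : Set Ω) (hA : MeasurableSet A) (hG : G ≤ F) (hH : H ≤ F) :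
    (P ({ω | (P[A.indicator (fun _ => (1 : ℝ)) | G]) ω ≤ δ}
        ∩ {ω | 1 - δ ≤ (P[A.indicator (fun _ => (1 : ℝ)) | H]) ω})).toReal
      ≤ δ * ((P {ω | (P[A.indicator (fun _ => (1 : ℝ)) | G]) ω ≤ δ}).toReal
          + (P {ω | 1 - δ ≤ (P[A.indicator (fun _ => (1 : ℝ)) | H]) ω}).toReal) := by
  set f : Ω → ℝ := A.indicator (fun _ => (1 : ℝ)) with hf_def
  have hf : Integrable f P := (integrable_const (1 : ℝ)).indicator hA
  set X := P[f | G] with hX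
  set Y := P[f | H] with hY
  set S := {ω | X ω ≤ δ} with hSdef
  set T := {ω | 1 - δ ≤ Y ω} with hTdef
  have hSG : MeasurableSet[G] S :=
    measurableSet_le stronglyMeasurable_condExp.measurable measurable_const
  have hTH : MeasurableSet[H] T :=
    measurableSet_le measurable_const stronglyMeasurable_condExp.measurable
  have hS : MeasurableSet[F] S := hG _ hSG
  have hT : MeasurableSet[F] T := hH _ hTH
  -- integral of f over a set = measure of intersection with A
  have hint : ∀ s : Set Ω, ∫ ω in s, f ω ∂P = (P (A ∩ s)).toReal := by
    intro s
    rw [hf_def]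
    rw [integral_indicator hA, setIntegral_const, smul_eq_mul, mul_one,
      measureReal_def, Measure.restrict_apply hA]
  -- step 1 : P(A ∩ S) ≤ δ P(S)
  have h1 : (P (A ∩ S)).toReal ≤ δ * (P S).toReal := by
    rw [← hint S, ← setIntegral_condExp hG hf hSG]
    calc ∫ ω in S, X ω ∂P ≤ ∫ _ω in S, δ ∂P := by
          refine setIntegral_mono_on integrable_condExp.integrableOn
            (integrableOn_const (measure_ne_top _ _)) hS ?_
          intro ω hω; exact hω
      _ = δ * (P S).toReal := by rw [setIntegral_const, measureReal_def, smul_eq_mul, mul_comm]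
  -- step 2 : (1-δ) P(T) ≤ P(A ∩ T)
  have h2 : (1 - δ) * (P T).toReal ≤ (P (A ∩ T)).toReal := by
    rw [← hint T, ← setIntegral_condExp hH hf hTH]
    calc (1 - δ) * (P T).toReal = ∫ _ω in T, (1 - δ) ∂P := by
          rw [setIntegral_const, measureReal_def, smul_eq_mul, mul_comm]
      _ ≤ ∫ ω in T, Y ω ∂P := by
          refine setIntegral_mono_on (integrableOn_const (measure_ne_top _ _))
            integrable_condExp.integrableOn hT ?_
          intro ω hω; exact hω
  -- P(Aᶜ ∩ T) ≤ δ P(T)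
  have hsplit : (P T).toReal = (P (A ∩ T)).toReal + (P (Aᶜ ∩ T)).toReal := by
    rw [← ENNReal.toReal_add (measure_ne_top _ _) (measure_ne_top _ _)]
    congr 1
    rw [Set.inter_comm A, Set.inter_comm Aᶜ, ← Set.diff_eq,
      measure_inter_add_diff₀ T hA.nullMeasurableSet]
  have h3 : (P (Aᶜ ∩ T)).toReal ≤ δ * (P T).toReal := by nlinarith [h2, hsplit]
  -- inclusion
  have hsub : S ∩ T ⊆ (A ∩ S) ∪ (Aᶜ ∩ T) := by
    intro ω hω
    by_cases h : ω ∈ A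
    · exact Or.inl ⟨h, hω.1⟩
    · exact Or.inr ⟨h, hω.2⟩
  have hle : (P (S ∩ T)).toReal ≤ (P (A ∩ S)).toReal + (P (Aᶜ ∩ T)).toReal := by
    calc (P (S ∩ T)).toReal ≤ (P ((A ∩ S) ∪ (Aᶜ ∩ T))).toReal := by
          exact ENNReal.toReal_mono (measure_ne_top _ _) (measure_mono hsub)
      _ ≤ (P (A ∩ S)).toReal + (P (Aᶜ ∩ T)).toReal := by
          rw [← ENNReal.toReal_add (measure_ne_top _ _) (measure_ne_top _ _)]
          exact ENNReal.toReal_mono (by finiteness) (measure_union_le _ _)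
  calc (P (S ∩ T)).toReal ≤ (P (A ∩ S)).toReal + (P (Aᶜ ∩ T)).toReal := hle
    _ ≤ δ * (P S).toReal + δ * (P T).toReal := add_le_add h1 h3
    _ = δ * ((P S).toReal + (P T).toReal) := by ring

theorem corner_probability_bound
    {δ : ℝ} (hδ0 : 0 < δ) (hδ1 : δ < 1)
    {Ω : Type} {F : MeasurableSpace Ω} (P : Measure Ω) [IsProbabilityMeasure P]
    (A : Set Ω) (hA : MeasurableSet A)
    (G H : MeasurableSpace Ω) (hG : G ≤ F) (hH : H ≤ F) :
    (P ({ω | (P[A.indicator (fun _ => (1 : ℝ)) | G]) ω ≤ δ}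
        ∩ {ω | 1 - δ ≤ (P[A.indicator (fun _ => (1 : ℝ)) | H]) ω})).toReal
      ≤ δ * ((P {ω | (P[A.indicator (fun _ => (1 : ℝ)) | G]) ω ≤ δ}).toReal
          + (P {ω | 1 - δ ≤ (P[A.indicator (fun _ => (1 : ℝ)) | H]) ω}).toReal) :=
  corner_probability_bound_aux hδ0 hδ1 G H P A hA hG hH
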